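/- Under the model X = ΛU + ε_x, Y = Xᵀβ + g(U) + ε_y, where ε_x is independent of (U, ε_y), ε_y has mean zero and is independent of (X,U), g is measurable with E[g(U)] = 0, and B ∈ ℝ^{p×(p−q)} satisfies Bᵀ Λ = 0, the synthetic instrument SIV = Bᵀ X satisfies the exclusion/unconfoundedness moment condition: E[SIV · (Y − Xᵀβ)] = 0 when β equals its true value. -/

import Mathlib

open Set MeasureTheory ProbabilityTheory

namespace SIVAux

variable {Ω : Type*} [MeasurableSpace Ω] {μ : MeasureTheory.Measure Ω}

/-- If `μ A + μ Aᶜ ≤ 1` for a probability measure, then `A` is null measurable. -/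
lemma nullMeasurableSet_of_add_compl_le_one [IsProbabilityMeasure μ] {A : Set Ω}
    (h : μ A + μ Aᶜ ≤ 1) : NullMeasurableSet A μ := by
  set MA := toMeasurable μ A with hMA
  set MB := toMeasurable μ Aᶜ with hMB
  have hMAm : MeasurableSet MA := measurableSet_toMeasurable μ A
  have hMBm : MeasurableSet MB := measurableSet_toMeasurable μ Aᶜ
  have hU : MA ∪ MB = univ := by
    apply eq_univ_of_univ_subset
    rw [← union_compl_self A]
    exact union_subset_union (subset_toMeasurable μ A) (subset_toMeasurable μ Aᶜ)
  have hsum : μ (MA ∪ MB) + μ (MA ∩ MB) = μ MA + μ MB := measure_union_add_inter MA hMBm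
  have h1 : μ (MA ∪ MB) = 1 := by rw [hU]; exact measure_univ
  have hle : (1 : ENNReal) + μ (MA ∩ MB) ≤ 1 + 0 := by
    rw [add_zero, ← h1]
    calc μ (MA ∪ MB) + μ (MA ∩ MB) = μ MA + μ MB := hsum
      _ = μ A + μ Aᶜ := by rw [measure_toMeasurable, measure_toMeasurable]
      _ ≤ 1 := h
      _ = μ (MA ∪ MB) := h1.symm
  have hnull : μ (MA ∩ MB) = 0 :=
    le_antisymm ((WithTop.add_le_add_iff_left ENNReal.one_ne_top).mp hle) zero_le
  have haeq : A =ᵐ[μ] MA := by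
    rw [MeasureTheory.ae_eq_set]
    constructor
    · have : A \ MA = ∅ := diff_eq_empty.mpr (subset_toMeasurable μ A)
      rw [this]; exact measure_empty
    · refine measure_mono_null (fun ω hω => ?_) hnull
      exact ⟨hω.1, subset_toMeasurable μ Aᶜ hω.2⟩
  exact (hMAm.nullMeasurableSet.congr haeq.symm)

/-- Band existence: if `μ {s₀ < |f|} ≠ 0` then for any `θ > 0` there is a multiplicative
band `Ioc a (a(1+θ))` (for `f` or `-f`) with nonzero outer measure. -/
lemma exists_band {f : Ω → ℝ} {s₀ θ : ℝ} (hs₀ : 0 < s₀) (hθ : 0 < θ)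
    (hf : μ {ω | s₀ < |f ω|} ≠ 0) :
    ∃ σ : Bool, ∃ a : ℝ, 0 < a ∧
      μ ((if σ then f else fun ω => -f ω) ⁻¹' Ioc a (a * (1 + θ))) ≠ 0 := by
  by_contra hcon
  push_neg at hcon
  apply hf
  have h1θ : (1 : ℝ) < 1 + θ := by linarith
  have hcover : {ω | s₀ < |f ω|} ⊆ ⋃ (σ : Bool) (n : ℕ),
      (if σ then f else fun ω => -f ω) ⁻¹' Ioc (s₀ * (1 + θ) ^ n) (s₀ * (1 + θ) ^ n * (1 + θ)) := by
    intro ω hω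
    simp only [mem_setOf_eq] at hω
    have hx0 : 0 < |f ω| := lt_trans hs₀ hω
    have hex : ∃ n : ℕ, |f ω| ≤ s₀ * (1 + θ) ^ (n + 1) := by
      obtain ⟨N, hN⟩ := pow_unbounded_of_one_lt (|f ω| / s₀) h1θ
      refine ⟨N, ?_⟩
      have := (div_lt_iff₀ hs₀).mp hN
      calc |f ω| ≤ (1 + θ) ^ N * s₀ := le_of_lt this
        _ ≤ s₀ * (1 + θ) ^ (N + 1) := by
            rw [mul_comm]
            have : (1 + θ) ^ N ≤ (1 + θ) ^ (N + 1) :=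
              pow_le_pow_right₀ (le_of_lt h1θ) (Nat.le_succ N)
            nlinarith [pow_pos (lt_trans zero_lt_one h1θ) N]
    set n := Nat.find hex with hn
    have hn2 : |f ω| ≤ s₀ * (1 + θ) ^ (n + 1) := Nat.find_spec hex
    have hn1 : s₀ * (1 + θ) ^ n < |f ω| := by
      rcases Nat.eq_zero_or_pos n with h0 | hpos
      · rw [h0]; simpa using hω
      · obtain ⟨m, hm⟩ := Nat.exists_eq_succ_of_ne_zero (Nat.pos_iff_ne_zero.mp hpos)
        have := Nat.find_min hex (m := m) (by omega)
        push_neg at this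
        rw [hm]
        simpa [Nat.succ_eq_add_one] using this
    have hmem : |f ω| ∈ Ioc (s₀ * (1 + θ) ^ n) (s₀ * (1 + θ) ^ n * (1 + θ)) := by
      constructor
      · exact hn1
      · calc |f ω| ≤ s₀ * (1 + θ) ^ (n + 1) := hn2
          _ = s₀ * (1 + θ) ^ n * (1 + θ) := by ring
    rcases abs_cases (f ω) with ⟨habs, _⟩ | ⟨habs, _⟩
    · refine mem_iUnion.mpr ⟨true, mem_iUnion.mpr ⟨n, ?_⟩⟩
      simpa [habs ▸ hmem] using (habs ▸ hmem)
    · refine mem_iUnion.mpr ⟨false, mem_iUnion.mpr ⟨n, ?_⟩⟩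
      have : -f ω = |f ω| := by rw [habs]
      simp only [if_false, mem_preimage, Bool.false_eq_true]
      rw [this]
      exact hmem
  refine measure_mono_null hcover ?_
  refine measure_iUnion_null fun σ => measure_iUnion_null fun n => ?_
  exact hcon σ (s₀ * (1 + θ) ^ n) (by positivity)

/-- Core sandwich inequality on a band. -/
lemma core_ineq [IsProbabilityMeasure μ] {f h P : Ω → ℝ}
    (hind : IndepFun f h μ) (hPm : Measurable P)
    (hae : (fun ω => f ω * h ω) =ᵐ[μ] P)
    {t a θ : ℝ} (ht : 0 < t) (ha : 0 < a) (hθ : 0 < θ)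
    (hF : μ (f ⁻¹' Ioc a (a * (1 + θ))) ≠ 0) :
    μ (h ⁻¹' Ioi t) + μ (h ⁻¹' Iic t) + μ (h ⁻¹' Ioi (t * (1 + θ)))
      ≤ 1 + μ (h ⁻¹' Ioi (t / (1 + θ))) := by
  have h1θ : (0 : ℝ) < 1 + θ := by linarith
  set b := a * (1 + θ) with hb
  have hab : a < b := by nlinarith
  have hb0 : 0 < b := lt_trans ha hab
  set F := f ⁻¹' Ioc a b with hFdef
  set c := μ F with hc
  have hc_ne_top : c ≠ ⊤ := (measure_ne_top μ F)
  -- exceptional set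
  set N := toMeasurable μ {ω | f ω * h ω ≠ P ω} with hN
  have hNnull : μ N = 0 := by
    rw [hN, measure_toMeasurable]
    exact hae
  have hNsub : {ω | f ω * h ω ≠ P ω} ⊆ N := subset_toMeasurable μ _
  have hE : ∀ ω, ω ∉ N → f ω * h ω = P ω := fun ω hω => by
    by_contra hne; exact hω (hNsub hne)
  -- independence
  have key : ∀ T : Set ℝ, MeasurableSet T → μ (F ∩ h ⁻¹' T) = c * μ (h ⁻¹' T) := fun T hT =>
    hind.measure_inter_preimage_eq_mul _ _ measurableSet_Ioc hT
  set ν := μ.restrict F with hν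
  have hν_apply : ∀ {A : Set Ω}, MeasurableSet A → ν A = μ (A ∩ F) := fun {A} hA =>
    Measure.restrict_apply hA
  -- measurable P-level sets
  have hPa : MeasurableSet {ω | t * a < P ω} := measurableSet_lt measurable_const hPm
  have hPb : MeasurableSet {ω | t * b < P ω} := measurableSet_lt measurable_const hPm
  -- Step 1 : μ (F ∩ {h > t}) ≤ ν {t*a < P}
  have step1 : μ (F ∩ h ⁻¹' Ioi t) ≤ ν {ω | t * a < P ω} := by
    have hsub : F ∩ h ⁻¹' Ioi t ⊆ ({ω | t * a < P ω} ∩ F) ∪ N := by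
      rintro ω ⟨hωF, hωh⟩
      by_cases hωN : ω ∈ N
      · exact Or.inr hωN
      · left
        refine ⟨?_, hωF⟩
        have heq := hE ω hωN
        have h1 : a < f ω := hωF.1
        have h2 : t < h ω := hωh
        have : t * a < f ω * h ω := by nlinarith
        simpa [heq] using this
    calc μ (F ∩ h ⁻¹' Ioi t) ≤ μ (({ω | t * a < P ω} ∩ F) ∪ N) := measure_mono hsub
      _ ≤ μ ({ω | t * a < P ω} ∩ F) + μ N := measure_union_le _ _
      _ = ν {ω | t * a < P ω} := by rw [hNnull, add_zero, hν_apply hPa]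
  -- Step 2 : μ (F ∩ {h ≤ t}) ≤ ν {t*b < P}ᶜ
  have step2 : μ (F ∩ h ⁻¹' Iic t) ≤ ν {ω | t * b < P ω}ᶜ := by
    have hsub : F ∩ h ⁻¹' Iic t ⊆ ({ω | t * b < P ω}ᶜ ∩ F) ∪ N := by
      rintro ω ⟨hωF, hωh⟩
      by_cases hωN : ω ∈ N
      · exact Or.inr hωN
      · left
        refine ⟨?_, hωF⟩
        have heq := hE ω hωN
        have h1 : a < f ω := hωF.1
        have h1' : f ω ≤ b := hωF.2
        have h2 : h ω ≤ t := hωh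
        simp only [mem_compl_iff, mem_setOf_eq, not_lt]
        rw [← heq]
        nlinarith
    calc μ (F ∩ h ⁻¹' Iic t) ≤ μ (({ω | t * b < P ω}ᶜ ∩ F) ∪ N) := measure_mono hsub
      _ ≤ μ ({ω | t * b < P ω}ᶜ ∩ F) + μ N := measure_union_le _ _
      _ = ν {ω | t * b < P ω}ᶜ := by rw [hNnull, add_zero, hν_apply hPb.compl]
  -- Step 3 : μ (F ∩ {h > t(1+θ)}) ≤ ν {t*b < P}
  have step3 : μ (F ∩ h ⁻¹' Ioi (t * (1 + θ))) ≤ ν {ω | t * b < P ω} := by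
    have hsub : F ∩ h ⁻¹' Ioi (t * (1 + θ)) ⊆ ({ω | t * b < P ω} ∩ F) ∪ N := by
      rintro ω ⟨hωF, hωh⟩
      by_cases hωN : ω ∈ N
      · exact Or.inr hωN
      · left
        refine ⟨?_, hωF⟩
        have heq := hE ω hωN
        have h1 : a < f ω := hωF.1
        have h2 : t * (1 + θ) < h ω := hωh
        have hh0 : 0 < h ω := lt_trans (by positivity) h2
        simp only [mem_setOf_eq]
        rw [← heq, hb]
        nlinarith
    calc μ (F ∩ h ⁻¹' Ioi (t * (1 + θ))) ≤ μ (({ω | t * b < P ω} ∩ F) ∪ N) := measure_mono hsub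
      _ ≤ μ ({ω | t * b < P ω} ∩ F) + μ N := measure_union_le _ _
      _ = ν {ω | t * b < P ω} := by rw [hNnull, add_zero, hν_apply hPb]
  -- Step 4 : ν {t*a < P} ≤ μ (F ∩ {h > t/(1+θ)})
  have step4 : ν {ω | t * a < P ω} ≤ μ (F ∩ h ⁻¹' Ioi (t / (1 + θ))) := by
    have hsub : {ω | t * a < P ω} ∩ F ⊆ (F ∩ h ⁻¹' Ioi (t / (1 + θ))) ∪ N := by
      rintro ω ⟨hωP, hωF⟩
      by_cases hωN : ω ∈ N
      · exact Or.inr hωN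
      · left
        refine ⟨hωF, ?_⟩
        have heq := hE ω hωN
        have h1 : a < f ω := hωF.1
        have h1' : f ω ≤ b := hωF.2
        have hP : t * a < f ω * h ω := by rw [heq]; exact hωP
        have hf0 : 0 < f ω := lt_trans ha h1
        have hh0 : 0 < h ω := by
          by_contra hcon
          push_neg at hcon
          nlinarith
        simp only [mem_preimage, mem_Ioi]
        rw [div_lt_iff₀ h1θ]
        -- t < h ω * (1 + θ) : from f ω * h ω > t*a and f ω ≤ a(1+θ)
        have : f ω * h ω ≤ a * (1 + θ) * h ω := by
          apply mul_le_mul_of_nonneg_right _ (le_of_lt hh0)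
          rw [hb] at h1'; exact h1'
        nlinarith
    calc ν {ω | t * a < P ω} = μ ({ω | t * a < P ω} ∩ F) := hν_apply hPa
      _ ≤ μ ((F ∩ h ⁻¹' Ioi (t / (1 + θ))) ∪ N) := measure_mono hsub
      _ ≤ μ (F ∩ h ⁻¹' Ioi (t / (1 + θ))) + μ N := measure_union_le _ _
      _ = μ (F ∩ h ⁻¹' Ioi (t / (1 + θ))) := by rw [hNnull, add_zero]
  -- assemble
  have hcompl : ν {ω | t * b < P ω} + ν {ω | t * b < P ω}ᶜ = c := by
    rw [measure_add_measure_compl hPb]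
    rw [hν]
    simp [Measure.restrict_apply_univ, hc]
  have main : c * (μ (h ⁻¹' Ioi t) + μ (h ⁻¹' Iic t) + μ (h ⁻¹' Ioi (t * (1 + θ))))
      ≤ c * (1 + μ (h ⁻¹' Ioi (t / (1 + θ)))) := by
    have lhs_eq : c * (μ (h ⁻¹' Ioi t) + μ (h ⁻¹' Iic t) + μ (h ⁻¹' Ioi (t * (1 + θ))))
        = μ (F ∩ h ⁻¹' Ioi t) + μ (F ∩ h ⁻¹' Iic t) + μ (F ∩ h ⁻¹' Ioi (t * (1 + θ))) := by
      rw [mul_add, mul_add, key _ measurableSet_Ioi, key _ measurableSet_Iic,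
        key _ measurableSet_Ioi]
    have rhs_eq : c * (1 + μ (h ⁻¹' Ioi (t / (1 + θ))))
        = c + μ (F ∩ h ⁻¹' Ioi (t / (1 + θ))) := by
      rw [mul_add, mul_one, key _ measurableSet_Ioi]
    rw [lhs_eq, rhs_eq]
    calc μ (F ∩ h ⁻¹' Ioi t) + μ (F ∩ h ⁻¹' Iic t) + μ (F ∩ h ⁻¹' Ioi (t * (1 + θ)))
        ≤ ν {ω | t * a < P ω} + ν {ω | t * b < P ω}ᶜ + ν {ω | t * b < P ω} :=
          add_le_add (add_le_add step1 step2) step3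
      _ = ν {ω | t * a < P ω} + c := by
          rw [add_assoc, add_comm (ν {ω | t * b < P ω}ᶜ), hcompl]
      _ ≤ μ (F ∩ h ⁻¹' Ioi (t / (1 + θ))) + c := add_le_add_left step4 c
      _ = c + μ (F ∩ h ⁻¹' Ioi (t / (1 + θ))) := add_comm _ _
  exact (ENNReal.mul_le_mul_iff_right hF hc_ne_top).mp main

/-- Goodness of a point for an antitone function: approximable from both sides. -/
def Good (η : ℝ → ENNReal) (t : ℝ) : Prop :=
  ∀ ε : ENNReal, 0 < ε →
    (∃ s, s < t ∧ η s ≤ η t + ε) ∧ (∃ u, t < u ∧ η t ≤ η u + ε)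

lemma countable_not_good {η : ℝ → ENNReal} (hanti : Antitone η) (hle : ∀ t, η t ≤ 1) :
    {t : ℝ | ¬ Good η t}.Countable := by
  classical
  have hne_top : ∀ t, η t ≠ ⊤ := fun t => (lt_of_le_of_lt (hle t) (by norm_num)).ne
  set ηm : ℝ → ENNReal := fun t => ⨅ n : ℕ, η (t - 1 / (n + 1)) with hηm
  set ηp : ℝ → ENNReal := fun t => ⨆ n : ℕ, η (t + 1 / (n + 1)) with hηp
  have hp_le : ∀ t, ηp t ≤ η t := fun t => iSup_le fun n =>
    hanti (le_add_of_nonneg_right (by positivity))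
  have hle_m : ∀ t, η t ≤ ηm t := fun t => le_iInf fun n =>
    hanti (by
      have : (0:ℝ) < 1 / ((n:ℝ) + 1) := by positivity
      linarith)
  have hp_ge : ∀ t u, t < u → η u ≤ ηp t := by
    intro t u htu
    obtain ⟨n, hn⟩ := exists_nat_one_div_lt (by linarith : (0:ℝ) < u - t)
    calc η u ≤ η (t + 1 / (n + 1)) := hanti (by push_cast; push_cast at hn; linarith)
      _ ≤ ηp t := le_iSup (fun n : ℕ => η (t + 1 / (n + 1))) n
  have hm_le : ∀ s t, s < t → ηm t ≤ η s := by
    intro s t hst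
    obtain ⟨n, hn⟩ := exists_nat_one_div_lt (by linarith : (0:ℝ) < t - s)
    calc ηm t ≤ η (t - 1 / (n + 1)) := iInf_le _ n
      _ ≤ η s := hanti (by push_cast; push_cast at hn; linarith)
  -- bad points have a jump
  have hsub : {t : ℝ | ¬ Good η t} ⊆ {t : ℝ | ηp t < ηm t} := by
    intro t ht
    simp only [mem_setOf_eq] at ht ⊢
    by_contra hcon
    push_neg at hcon
    have heq : ηp t = η t ∧ ηm t = η t := by
      constructor
      · exact le_antisymm (hp_le t) (le_trans (hle_m t) hcon)
      · exact le_antisymm (le_trans hcon (hp_le t)) (hle_m t)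
    apply ht
    intro ε hε
    constructor
    · have : ηm t < η t + ε := by
        rw [heq.2]
        exact ENNReal.lt_add_right (hne_top t) hε.ne'
      obtain ⟨n, hn⟩ := iInf_lt_iff.mp this
      refine ⟨t - 1 / (n + 1), ?_, le_of_lt hn⟩
      have : (0:ℝ) < 1 / ((n:ℝ) + 1) := by positivity
      linarith
    · by_cases hcase : η t ≤ ε
      · exact ⟨t + 1, by linarith, le_trans hcase (by simp : ε ≤ η (t+1) + ε)⟩
      · push_neg at hcase
        have hlt : η t - ε < ηp t := by
          rw [heq.1]
          exact ENNReal.sub_lt_self (hne_top t) (pos_of_gt hcase).ne' hε.ne'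
        obtain ⟨n, hn⟩ := lt_iSup_iff.mp hlt
        refine ⟨t + 1 / (n + 1), by
          have : (0:ℝ) < 1 / ((n:ℝ) + 1) := by positivity
          linarith, ?_⟩
        have hεtop : ε ≠ ⊤ := (hcase.trans (lt_of_le_of_lt (hle t) (by norm_num))).ne
        have := (ENNReal.sub_lt_iff_lt_right hεtop hcase.le).mp hn
        exact le_of_lt this
  refine Set.Countable.mono hsub ?_
  -- inject jumps into ℚ
  set T := {t : ℝ | ηp t < ηm t} with hT
  have hm_ne_top : ∀ t, ηm t ≠ ⊤ := fun t =>
    (lt_of_le_of_lt (le_trans (iInf_le (fun n : ℕ => η (t - 1 / (n + 1))) 0) (hle _))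
      (by norm_num)).ne
  have hp_ne_top : ∀ t, ηp t ≠ ⊤ := fun t =>
    (lt_of_le_of_lt (le_trans (hp_le t) (hle t)) (by norm_num)).ne
  have hq : ∀ t ∈ T, ∃ q : ℚ, (ηp t).toReal < (q:ℝ) ∧ (q:ℝ) < (ηm t).toReal := by
    intro t ht
    apply exists_rat_btwn
    rw [ENNReal.toReal_lt_toReal (hp_ne_top t) (hm_ne_top t)]
    exact ht
  choose! q hq1 hq2 using hq
  have hmono : ∀ t₁ ∈ T, ∀ t₂ ∈ T, t₁ < t₂ → q t₂ < q t₁ := by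
    intro t₁ h₁ t₂ h₂ hlt
    have hkey : ηm t₂ ≤ ηp t₁ :=
      le_trans (hm_le _ _ (by linarith : (t₁ + t₂)/2 < t₂)) (hp_ge _ _ (by linarith))
    have h3 : (ηm t₂).toReal ≤ (ηp t₁).toReal := ENNReal.toReal_mono (hp_ne_top t₁) hkey
    have : (q t₂ : ℝ) < (q t₁ : ℝ) :=
      lt_of_lt_of_le (hq2 t₂ h₂) (le_trans h3 (le_of_lt (hq1 t₁ h₁)))
    exact_mod_cast this
  rw [Set.countable_iff_exists_injOn]
  refine ⟨fun t => Encodable.encode (q t), fun t₁ h₁ t₂ h₂ heq => ?_⟩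
  by_contra hne
  rcases lt_or_gt_of_ne hne with hlt | hlt
  · exact absurd (Encodable.encode_injective heq) (hmono t₁ h₁ t₂ h₂ hlt).ne'
  · exact absurd (Encodable.encode_injective heq) (hmono t₂ h₂ t₁ h₁ hlt).ne

lemma level_nullMeasurable [IsProbabilityMeasure μ] {f h P : Ω → ℝ}
    (hind : IndepFun f h μ) (hPm : Measurable P)
    (hae : (fun ω => f ω * h ω) =ᵐ[μ] P)
    (hfnz : ∃ s, 0 < s ∧ μ {ω | s < |f ω|} ≠ 0)
    {t : ℝ} (ht : 0 < t) (hgood : Good (fun r => μ (h ⁻¹' Ioi r)) t) :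
    NullMeasurableSet (h ⁻¹' Ioi t) μ := by
  set η : ℝ → ENNReal := fun r => μ (h ⁻¹' Ioi r) with hη
  have hanti : Antitone η := fun r₁ r₂ h12 =>
    measure_mono (preimage_mono (Ioi_subset_Ioi h12))
  obtain ⟨s₀, hs₀, hfs₀⟩ := hfnz
  apply nullMeasurableSet_of_add_compl_le_one
  have hcompl : (h ⁻¹' Ioi t)ᶜ = h ⁻¹' Iic t := by rw [← preimage_compl, compl_Ioi]
  rw [hcompl]
  apply ENNReal.le_of_forall_pos_le_add
  intro ε hε _
  have hε2 : (0:ENNReal) < (ε:ENNReal)/2 :=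
    ENNReal.div_pos (by exact_mod_cast hε.ne') (by norm_num)
  obtain ⟨⟨s, hst, hs⟩, ⟨u, htu, hu⟩⟩ := hgood ((ε:ENNReal)/2) hε2
  set s' := max s (t/2) with hs'def
  have hs'0 : 0 < s' := lt_of_lt_of_le (by linarith) (le_max_right s (t/2))
  have hs't : s' < t := max_lt hst (by linarith)
  have hηs' : η s' ≤ η t + (ε:ENNReal)/2 :=
    le_trans (hanti (le_max_left s (t/2))) hs
  set θ := min (t/s' - 1) (u/t - 1) with hθdef
  have hθ : 0 < θ := by
    apply lt_min
    · rw [sub_pos, lt_div_iff₀ hs'0]; linarith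
    · rw [sub_pos, lt_div_iff₀ ht]; linarith
  have h1θ : (0:ℝ) < 1 + θ := by linarith
  have hts' : s' ≤ t / (1 + θ) := by
    rw [le_div_iff₀ h1θ]
    have : 1 + θ ≤ t / s' := by
      have := min_le_left (t/s' - 1) (u/t - 1)
      rw [hθdef]; linarith [this]
    calc s' * (1 + θ) ≤ s' * (t / s') := by nlinarith
      _ = t := by field_simp
  have htu' : t * (1 + θ) ≤ u := by
    have : 1 + θ ≤ u / t := by
      have := min_le_right (t/s' - 1) (u/t - 1)
      rw [hθdef]; linarith [this]
    calc t * (1 + θ) ≤ t * (u / t) := by nlinarith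
      _ = u := by field_simp
  -- get a band and apply the core inequality
  obtain ⟨σ, a, ha, hband⟩ := exists_band hs₀ hθ hfs₀
  have hcore : η t + μ (h ⁻¹' Iic t) + η (t * (1 + θ)) ≤ 1 + η (t / (1 + θ)) := by
    cases σ with
    | true =>
      simp only [if_true] at hband
      exact core_ineq hind hPm hae ht ha hθ hband
    | false =>
      simp only [Bool.false_eq_true, if_false] at hband
      have hind' : IndepFun (fun ω => -f ω) h μ := by
        have := hind.comp (φ := fun x : ℝ => -x) (ψ := id) measurable_neg measurable_id
        exact this
      have hae' : (fun ω => (-f ω) * h ω) =ᵐ[μ] (fun ω => -P ω) :=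
        hae.mono fun ω hω => by
          have := congrArg Neg.neg hω
          simpa [neg_mul] using this
      exact core_ineq hind' hPm.neg hae' ht ha hθ hband
  have c1 : η t ≤ η (t * (1 + θ)) + (ε:ENNReal)/2 :=
    le_trans hu (add_le_add_left (hanti htu') _)
  have c2 : η (t / (1 + θ)) ≤ η t + (ε:ENNReal)/2 :=
    le_trans (hanti hts') hηs'
  have main : (η t + μ (h ⁻¹' Iic t)) + η t ≤ (1 + (ε:ENNReal)) + η t := by
    calc (η t + μ (h ⁻¹' Iic t)) + η t
        ≤ (η t + μ (h ⁻¹' Iic t)) + (η (t * (1 + θ)) + (ε:ENNReal)/2) := add_le_add_right c1 _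
      _ = (η t + μ (h ⁻¹' Iic t) + η (t * (1 + θ))) + (ε:ENNReal)/2 := by abel
      _ ≤ (1 + η (t / (1 + θ))) + (ε:ENNReal)/2 := add_le_add_left hcore _
      _ ≤ (1 + (η t + (ε:ENNReal)/2)) + (ε:ENNReal)/2 :=
          add_le_add_left (add_le_add_right c2 _) _
      _ = (1 + ((ε:ENNReal)/2 + (ε:ENNReal)/2)) + η t := by abel
      _ = (1 + (ε:ENNReal)) + η t := by rw [ENNReal.add_halves]
  exact (WithTop.add_le_add_iff_right (measure_ne_top μ _)).mp main

lemma aem_of_indep [IsProbabilityMeasure μ] {f h : Ω → ℝ} (hind : IndepFun f h μ)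
    (hprod : AEMeasurable (fun ω => f ω * h ω) μ)
    (hfnz : ∃ s, 0 < s ∧ μ {ω | s < |f ω|} ≠ 0) : AEMeasurable h μ := by
  classical
  set P := hprod.mk _ with hPdef
  have hPm : Measurable P := hprod.measurable_mk
  have hae : (fun ω => f ω * h ω) =ᵐ[μ] P := hprod.ae_eq_mk
  have hae' : (fun ω => f ω * (-h ω)) =ᵐ[μ] (fun ω => -P ω) :=
    hae.mono fun ω hω => by
      have := congrArg Neg.neg hω
      simpa [mul_neg] using this
  have hind' : IndepFun f (fun ω => -h ω) μ := by
    have := hind.comp (φ := id) (ψ := fun x : ℝ => -x) measurable_id measurable_neg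
    exact this
  set η : ℝ → ENNReal := fun r => μ (h ⁻¹' Ioi r) with hη
  set η' : ℝ → ENNReal := fun r => μ ((fun ω => -h ω) ⁻¹' Ioi r) with hη'
  have hanti : Antitone η := fun r₁ r₂ h12 =>
    measure_mono (preimage_mono (Ioi_subset_Ioi h12))
  have hanti' : Antitone η' := fun r₁ r₂ h12 =>
    measure_mono (preimage_mono (Ioi_subset_Ioi h12))
  have hb : ∀ r, η r ≤ 1 := fun r => prob_le_one
  have hb' : ∀ r, η' r ≤ 1 := fun r => prob_le_one
  set Tb : Set ℝ := {r | ¬ Good η r} ∪ (fun r : ℝ => -r) ⁻¹' {r | ¬ Good η' r} ∪ {0} with hTb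
  have hTbc : Tb.Countable := by
    refine (((countable_not_good hanti hb).union ?_).union (countable_singleton 0))
    exact (countable_not_good hanti' hb').preimage neg_injective
  -- null-measurability of good levels
  have hS : ∀ r : ℝ, r ∉ Tb →
      NullMeasurableSet (if 0 < r then h ⁻¹' Ioi r else (h ⁻¹' Iio r)ᶜ) μ := by
    intro r hr
    rw [hTb] at hr
    simp only [union_def, mem_setOf_eq, mem_union, mem_preimage, mem_singleton_iff, not_or] at hr
    obtain ⟨⟨hg1, hg2⟩, hr0⟩ := hr
    push_neg at hg1 hg2
    by_cases hpos : 0 < r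
    · rw [if_pos hpos]
      exact level_nullMeasurable hind hPm hae hfnz hpos hg1
    · rw [if_neg hpos]
      have hneg : 0 < -r := by
        rcases lt_trichotomy r 0 with h | h | h
        · linarith
        · exact absurd h hr0
        · exact absurd h hpos
      have hnm := level_nullMeasurable hind' hPm.neg hae' hfnz hneg hg2
      have hset : (fun ω => -h ω) ⁻¹' Ioi (-r) = h ⁻¹' Iio r := by
        ext ω
        simp only [mem_preimage, mem_Ioi, mem_Iio]
        constructor <;> intro <;> linarith
      rw [hset] at hnm
      exact hnm.compl
  -- choice of good points in rational intervals
  have hchoice : ∀ p r : ℚ, ∃ c : ℝ, (p:ℝ) < (r:ℝ) → c ∈ Ioo (p:ℝ) (r:ℝ) ∧ c ∉ Tb := by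
    intro p r
    by_cases hpr : (p:ℝ) < (r:ℝ)
    · have hunc : ¬ (Ioo (p:ℝ) (r:ℝ)).Countable := by
        intro hc
        have h1 := hc.le_aleph0
        rw [Cardinal.mk_Ioo_real hpr] at h1
        exact absurd h1 (not_le.mpr Cardinal.aleph0_lt_continuum)
      have hne : (Ioo (p:ℝ) (r:ℝ) \ Tb).Nonempty := by
        rw [Set.diff_nonempty]
        intro hsub
        exact hunc (hTbc.mono hsub)
      obtain ⟨c, hc1, hc2⟩ := hne
      exact ⟨c, fun _ => ⟨hc1, hc2⟩⟩
    · exact ⟨0, fun h => absurd h hpr⟩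
  choose c hc using hchoice
  -- every level set of h is null measurable
  have hlevel : ∀ x : ℝ, NullMeasurableSet (h ⁻¹' Ioi x) μ := by
    intro x
    have hunion : h ⁻¹' Ioi x = ⋃ (p : ℚ) (r : ℚ)
        (_ : x < (p:ℝ) ∧ (p:ℝ) < (r:ℝ)),
        (if 0 < c p r then h ⁻¹' Ioi (c p r) else (h ⁻¹' Iio (c p r))ᶜ) := by
      ext ω
      simp only [mem_preimage, mem_Ioi, mem_iUnion]
      constructor
      · intro hω
        obtain ⟨p, hp1, hp2⟩ := exists_rat_btwn hω
        obtain ⟨r, hr1, hr2⟩ := exists_rat_btwn hp2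
        refine ⟨p, r, ⟨hp1, by exact_mod_cast hr1⟩, ?_⟩
        obtain ⟨hcmem, _⟩ := hc p r (by exact_mod_cast hr1)
        have hch : c p r < h ω := lt_trans hcmem.2 hr2
        by_cases h0 : 0 < c p r
        · rw [if_pos h0]; exact hch
        · rw [if_neg h0]; exact fun hcon => absurd hcon (not_lt.mpr (le_of_lt hch))
      · rintro ⟨p, r, ⟨hxp, hpr⟩, hω⟩
        obtain ⟨hcmem, _⟩ := hc p r hpr
        by_cases h0 : 0 < c p r
        · rw [if_pos h0] at hω
          exact lt_trans hxp (lt_trans hcmem.1 hω)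
        · rw [if_neg h0] at hω
          simp only [mem_compl_iff, mem_preimage, mem_Iio, not_lt] at hω
          exact lt_of_lt_of_le (lt_trans hxp hcmem.1) hω
    rw [hunion]
    refine NullMeasurableSet.iUnion fun p => NullMeasurableSet.iUnion fun r =>
      NullMeasurableSet.iUnion fun hpr => ?_
    exact hS (c p r) (hc p r hpr.2).2
  -- conclude
  have hmeas : @Measurable (NullMeasurableSpace Ω μ) ℝ _ _ h := by
    apply measurable_of_Ioi
    intro x
    exact hlevel x
  have hnm : NullMeasurable h μ := hmeas
  exact hnm.aemeasurable

/-- The crux lemma: independent factors with integrable product and zero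
(possibly junk) integrals have zero product integral. -/
lemma crux [IsProbabilityMeasure μ] {f h : Ω → ℝ} (hind : IndepFun f h μ)
    (hInt : Integrable (fun ω => f ω * h ω) μ)
    (hf0 : ∫ ω, f ω ∂μ = 0) (hh0 : ∫ ω, h ω ∂μ = 0) :
    ∫ ω, f ω * h ω ∂μ = 0 := by
  have hzero : ∀ k : Ω → ℝ, (¬ ∃ s, 0 < s ∧ μ {ω | s < |k ω|} ≠ 0) →
      μ {ω | k ω ≠ 0} = 0 := by
    intro k hk
    push_neg at hk
    have hsub : {ω | k ω ≠ 0} ⊆ ⋃ n : ℕ, {ω | 1/((n:ℝ)+1) < |k ω|} := by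
      intro ω hω
      obtain ⟨n, hn⟩ := exists_nat_one_div_lt (abs_pos.mpr hω)
      exact mem_iUnion.mpr ⟨n, hn⟩
    refine measure_mono_null hsub (measure_iUnion_null fun n => ?_)
    exact hk (1/((n:ℝ)+1)) (by positivity)
  by_cases hf : ∃ s, 0 < s ∧ μ {ω | s < |f ω|} ≠ 0
  · by_cases hh : ∃ s, 0 < s ∧ μ {ω | s < |h ω|} ≠ 0
    · have hprod : AEMeasurable (fun ω => f ω * h ω) μ :=
        hInt.aestronglyMeasurable.aemeasurable
      have hhm : AEMeasurable h μ := aem_of_indep hind hprod hf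
      have hprod' : AEMeasurable (fun ω => h ω * f ω) μ := by
        simpa [mul_comm] using hprod
      have hfm : AEMeasurable f μ := aem_of_indep hind.symm hprod' hh
      have hmul := hind.integral_mul_eq_mul_integral hfm.aestronglyMeasurable hhm.aestronglyMeasurable
      calc ∫ ω, f ω * h ω ∂μ = ∫ ω, (f * h) ω ∂μ := rfl
        _ = (∫ ω, f ω ∂μ) * ∫ ω, h ω ∂μ := hmul
        _ = 0 := by rw [hf0, hh0, mul_zero]
    · have hnull := hzero h hh
      have hzero' : (fun ω => f ω * h ω) =ᵐ[μ] (fun _ => 0) := by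
        rw [Filter.eventuallyEq_iff_exists_mem]
        refine ⟨{ω | h ω = 0}, ?_, fun ω hω => by
          have : h ω = 0 := hω
          simp [this]⟩
        rw [MeasureTheory.mem_ae_iff, compl_setOf]
        exact hnull
      rw [integral_congr_ae hzero', integral_zero]
  · have hnull := hzero f hf
    have hzero' : (fun ω => f ω * h ω) =ᵐ[μ] (fun _ => 0) := by
      rw [Filter.eventuallyEq_iff_exists_mem]
      refine ⟨{ω | f ω = 0}, ?_, fun ω hω => by
        have : f ω = 0 := hω
        simp [this]⟩
      rw [MeasureTheory.mem_ae_iff, compl_setOf]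
      exact hnull
    rw [integral_congr_ae hzero', integral_zero]

end SIVAux

open Matrix MeasureTheory ProbabilityTheory

/-- Under the model `X = ΛU + εx`, `Y = Xᵀβ + g(U) + εy`, with
`εx ⟂ (U, εy)`, `εy ⟂ (X, U)`, all centered and `E g(U) = 0`, the synthetic
instrument `SIV = BᵀX` (where `BᵀΛ = 0`) satisfies the exclusion/unconfoundedness
moment condition `E[SIV (Y - Xᵀβ)] = 0` at the true `β`. -/
theorem siv_moment_condition {p q : ℕ} (hq : q < p)
    {Ω : Type*} [MeasurableSpace Ω] (μ : Measure Ω) [IsProbabilityMeasure μ]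
    (Λ : Matrix (Fin p) (Fin q) ℝ)
    (B : Matrix (Fin p) (Fin (p - q)) ℝ) (hBΛ : Bᵀ * Λ = 0)
    (X εx : Ω → Fin p → ℝ) (U : Ω → Fin q → ℝ) (Y εy : Ω → ℝ)
    (β : Fin p → ℝ) (g : (Fin q → ℝ) → ℝ) (hg : Measurable g)
    (hX : ∀ ω, X ω = Λ.mulVec (U ω) + εx ω)
    (hY : ∀ ω, Y ω = X ω ⬝ᵥ β + g (U ω) + εy ω)
    (hIndep : IndepFun εx (fun ω => (U ω, εy ω)) μ)
    (hIndep2 : IndepFun εy (fun ω => (X ω, U ω)) μ)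
    (hEg : ∫ ω, g (U ω) ∂μ = 0)
    (hEεy : ∫ ω, εy ω ∂μ = 0)
    (hEεx : ∀ i, ∫ ω, εx ω i ∂μ = 0)
    (hInt1 : ∀ i, Integrable (fun ω => εx ω i * g (U ω)) μ)
    (hInt2 : ∀ i, Integrable (fun ω => εx ω i * εy ω) μ) :
    ∀ i, ∫ ω, Bᵀ.mulVec (X ω) i * (Y ω - X ω ⬝ᵥ β) ∂μ = 0 := by
  intro i
  -- the two moment conditions
  have hz1 : ∀ j, ∫ ω, εx ω j * g (U ω) ∂μ = 0 := fun j =>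
    SIVAux.crux
      (hIndep.comp (measurable_pi_apply j) (hg.comp measurable_fst))
      (hInt1 j) (hEεx j) hEg
  have hz2 : ∀ j, ∫ ω, εx ω j * εy ω ∂μ = 0 := fun j =>
    SIVAux.crux
      (hIndep.comp (measurable_pi_apply j) measurable_snd)
      (hInt2 j) (hEεx j) hEεy
  -- rewrite the integrand
  have hXB : ∀ ω, Bᵀ.mulVec (X ω) i = ∑ j, Bᵀ i j * εx ω j := by
    intro ω
    rw [hX ω, Matrix.mulVec_add, Matrix.mulVec_mulVec, hBΛ, Matrix.zero_mulVec]
    simp [Matrix.mulVec, dotProduct]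
  have hYX : ∀ ω, Y ω - X ω ⬝ᵥ β = g (U ω) + εy ω := fun ω => by rw [hY ω]; ring
  have hint : (fun ω => Bᵀ.mulVec (X ω) i * (Y ω - X ω ⬝ᵥ β)) =
      fun ω => ∑ j, (Bᵀ i j * (εx ω j * g (U ω)) + Bᵀ i j * (εx ω j * εy ω)) := by
    funext ω
    rw [hXB ω, hYX ω, Finset.sum_mul]
    exact Finset.sum_congr rfl fun j _ => by ring
  calc ∫ ω, Bᵀ.mulVec (X ω) i * (Y ω - X ω ⬝ᵥ β) ∂μ
      = ∫ ω, ∑ j, (Bᵀ i j * (εx ω j * g (U ω)) + Bᵀ i j * (εx ω j * εy ω)) ∂μ := by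
        rw [hint]
    _ = ∑ j, ∫ ω, (Bᵀ i j * (εx ω j * g (U ω)) + Bᵀ i j * (εx ω j * εy ω)) ∂μ := by
        apply integral_finset_sum
        intro j _
        exact ((hInt1 j).const_mul _).add ((hInt2 j).const_mul _)
    _ = 0 := by
        apply Finset.sum_eq_zero
        intro j _
        rw [integral_add ((hInt1 j).const_mul _) ((hInt2 j).const_mul _)]
        simp [MeasureTheory.integral_const_mul, hz1 j, hz2 j]
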